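/- Let J ∈ B(H) be an anti self-adjoint unitary operator on H = ℓ²(ℕ, ℍ) and m ∈ 𝕊. Then H_+^{Jm} := {u ∈ H : Ju = um} is a nonzero closed subset of H, it is closed under addition and under right multiplication by scalars from ℂ_m, and for all u, v ∈ H_+^{Jm} the inner product ⟨u, v⟩ lies in ℂ_m. -/

import Mathlib

noncomputable section

open Quaternion Filter Topology

/-- The division ring `ℍ` of real quaternions. -/
abbrev Hq := Quaternion ℝ

/-- The quaternionic Hilbert space `H = ℓ²(ℕ, ℍ)`. -/
abbrev Hsp := lp (fun _ : ℕ => Hq) 2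

/-- Right scalar multiplication `x ↦ x · q` on `ℓ²(ℕ, ℍ)` (coordinatewise right
multiplication by the quaternion `q`). -/
def rsmul (q : Hq) (x : Hsp) : Hsp := MulOpposite.op q • x

/-- The quaternionic inner product `⟨x, y⟩ = ∑ₙ x̄ₙ yₙ`. -/
def qinner (x y : Hsp) : Hq := ∑' n, star (x n) * y n

/-- The set `𝕊` of unit imaginary quaternions. -/
def QS : Set Hq := {q | star q = -q ∧ ‖q‖ = 1}

/-- The slice complex plane `ℂ_m = {α + mβ : α, β ∈ ℝ}`. -/
def sliceC (m : Hq) : Set Hq := {q | ∃ α β : ℝ, q = (α : Hq) + m * (β : Hq)}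

/-- The closed upper half slice plane `ℂ_m⁺ = {α + mβ : α ∈ ℝ, β ≥ 0}`. -/
def sliceCplus (m : Hq) : Set Hq :=
  {q | ∃ α β : ℝ, 0 ≤ β ∧ q = (α : Hq) + m * (β : Hq)}

/-- `T : H → H` is a bounded right linear operator, i.e. `T ∈ B(H)`. -/
def IsBoundedRightLinear (T : Hsp → Hsp) : Prop :=
  (∀ x y, T (x + y) = T x + T y) ∧ (∀ q x, T (rsmul q x) = rsmul q (T x)) ∧
    ∃ M : ℝ, ∀ x, ‖T x‖ ≤ M * ‖x‖

/-- `S` is the adjoint of the (bounded) operator `T`: `⟨y, Tx⟩ = ⟨Sy, x⟩` for all `x, y`. -/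
def AdjointOf (T S : Hsp → Hsp) : Prop := ∀ x y, qinner y (T x) = qinner (S y) x

/-- `T` is anti self-adjoint: `T* = -T`. -/
def IsAntiSelfAdjoint (T : Hsp → Hsp) : Prop := AdjointOf T (fun x => -(T x))

/-- `T` is unitary: `T*T = TT* = I`. -/
def IsUnitaryOp (T : Hsp → Hsp) : Prop :=
  ∃ S, AdjointOf T S ∧ (∀ x, S (T x) = x) ∧ (∀ x, T (S x) = x)

/-- The slice Hilbert space `H₊^{Jm} = {u ∈ H : Ju = um}`. -/
def Hplus (J : Hsp → Hsp) (m : Hq) : Set Hsp := {u | J u = rsmul m u}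

/-- `H₋^{Jm} = {u ∈ H : Ju = -um}`. -/
def Hminus (J : Hsp → Hsp) (m : Hq) : Set Hsp := {u | J u = -(rsmul m u)}

/-- `e` is an orthonormal basis of the (closed subspace given by the) set `S`:
each `e r` lies in `S`, the `e r` are orthonormal, and every `x ∈ S` expands as
`x = ∑ᵣ (e r) ⟨e r, x⟩`. Taking `S = Set.univ` gives orthonormal bases of `H`. -/
def IsONBasisOn (S : Set Hsp) (e : ℕ → Hsp) : Prop :=
  (∀ r, e r ∈ S) ∧ (∀ r s, qinner (e r) (e s) = if r = s then 1 else 0) ∧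
    ∀ x ∈ S, HasSum (fun r => rsmul (qinner (e r) x) (e r)) x

/-- A (possibly unbounded) operator in `H`: a domain together with an assignment of
values (only the values on the domain are relevant). -/
structure QOp where
  dom : Set Hsp
  app : Hsp → Hsp

/-- The operator `T` is right linear: its domain is a right `ℍ`-submodule and `T`
is additive and right `ℍ`-homogeneous on it. -/
def QOp.IsRightLinear (T : QOp) : Prop :=
  (0 ∈ T.dom) ∧
  (∀ x ∈ T.dom, ∀ y ∈ T.dom, x + y ∈ T.dom ∧ T.app (x + y) = T.app x + T.app y) ∧
  (∀ x ∈ T.dom, ∀ q : Hq, rsmul q x ∈ T.dom ∧ T.app (rsmul q x) = rsmul q (T.app x))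

/-- `T` is densely defined. -/
def QOp.IsDenselyDefined (T : QOp) : Prop := Dense T.dom

/-- `T` is a closed operator: its graph is closed in `H × H`. -/
def QOp.IsClosedOp (T : QOp) : Prop :=
  IsClosed {p : Hsp × Hsp | p.1 ∈ T.dom ∧ p.2 = T.app p.1}

/-- `S` is the adjoint `T*` of `T`: the domain of `S` is
`{y : x ↦ ⟨y, Tx⟩ is continuous on D(T)}` and `⟨y, Tx⟩ = ⟨Sy, x⟩` there. -/
def QOp.IsAdjointOf (T S : QOp) : Prop :=
  S.dom = {y | ContinuousOn (fun x => qinner y (T.app x)) T.dom} ∧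
  ∀ y ∈ S.dom, ∀ x ∈ T.dom, qinner y (T.app x) = qinner (S.app y) x

/-- Composition `S ∘ T` of partial operators, with the natural domain. -/
def QOp.comp (S T : QOp) : QOp :=
  ⟨{x ∈ T.dom | T.app x ∈ S.dom}, fun x => S.app (T.app x)⟩

/-- Equality of partial operators: equal domains and equal values on the domain. -/
def QOp.Eq (A B : QOp) : Prop := A.dom = B.dom ∧ ∀ x ∈ A.dom, A.app x = B.app x

/-- `T` is normal: `T*T = TT*` (including equality of the domains). -/
def QOp.IsNormal (T : QOp) : Prop :=
  ∃ S : QOp, T.IsAdjointOf S ∧ QOp.Eq (S.comp T) (T.comp S)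

/-- `T` is compact (as an operator on the subspace `S` of `H`): the image of the
closed unit ball of `S` is relatively compact. -/
def IsCompactOn (T : Hsp → Hsp) (S : Set Hsp) : Prop :=
  IsCompact (closure (T '' (Metric.closedBall 0 1 ∩ S)))

/-- `T` has squared Hilbert–Schmidt norm `v` on the subspace `S`:
`∑ᵣ ‖T eᵣ‖² = v` for some orthonormal basis `e` of `S`. -/
def HasHSNormSqOn (T : Hsp → Hsp) (S : Set Hsp) (v : ℝ) : Prop :=
  ∃ e : ℕ → Hsp, IsONBasisOn S e ∧ HasSum (fun r => ‖T (e r)‖ ^ 2) v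

/-- `T` is diagonal: there are an orthonormal basis `{φᵣ}` of `H` contained in `D(T)`
and quaternions `qᵣ` with `Tφᵣ = φᵣ qᵣ`. -/
def QOp.IsDiagonal (T : QOp) : Prop :=
  ∃ e : ℕ → Hsp, IsONBasisOn Set.univ e ∧ (∀ r, e r ∈ T.dom) ∧
    ∃ q : ℕ → Hq, ∀ r, T.app (e r) = rsmul (q r) (e r)

/-- The operator `Δ_q(N) = N² - N(q + q̄) + I|q|²` for a bounded operator `N`. -/
def sphDeltaB (N : Hsp → Hsp) (q : Hq) : Hsp → Hsp :=
  fun x => N (N x) - rsmul (q + star q) (N x) + rsmul ((normSq q : ℝ) : Hq) x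

/-- `q` lies in the spherical resolvent of the bounded operator `N`. -/
def inSphResolventB (N : Hsp → Hsp) (q : Hq) : Prop :=
  (∀ x, sphDeltaB N q x = 0 → x = 0) ∧
  Dense (Set.range (sphDeltaB N q)) ∧
  ∃ M : ℝ, ∀ x, ‖x‖ ≤ M * ‖sphDeltaB N q x‖

/-- The spherical spectrum of a bounded operator. -/
def sphSpectrumB (N : Hsp → Hsp) : Set Hq := {q | ¬ inSphResolventB N q}

/-- The domain `D(N²)` of the square of a partial operator. -/
def QOp.sqDom (N : QOp) : Set Hsp := {x ∈ N.dom | N.app x ∈ N.dom}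

/-- The map underlying `Δ_q(N) = N² - N(q + q̄) + I|q|²`, defined on `D(N²)`. -/
def sphDeltaU (N : QOp) (q : Hq) : Hsp → Hsp :=
  fun x => N.app (N.app x) - rsmul (q + star q) (N.app x) + rsmul ((normSq q : ℝ) : Hq) x

/-- `q` lies in the spherical resolvent of the operator `N ∈ C(H)`. -/
def inSphResolventU (N : QOp) (q : Hq) : Prop :=
  (∀ x ∈ N.sqDom, sphDeltaU N q x = 0 → x = 0) ∧
  Dense (sphDeltaU N q '' N.sqDom) ∧
  ∃ M : ℝ, ∀ x ∈ N.sqDom, ‖x‖ ≤ M * ‖sphDeltaU N q x‖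

/-- The spherical spectrum of `N ∈ C(H)`. -/
def sphSpectrumU (N : QOp) : Set Hq := {q | ¬ inSphResolventU N q}

/-- The circularization `Ω_K = {α + jβ : α + mβ ∈ K, j ∈ 𝕊}` of `K ⊆ ℂ_m`. -/
def circ (m : Hq) (K : Set Hq) : Set Hq :=
  {p | ∃ α β : ℝ, ∃ j ∈ QS, ((α : Hq) + m * (β : Hq) ∈ K) ∧ p = (α : Hq) + j * (β : Hq)}

set_option maxHeartbeats 1000000
set_option synthInstance.maxHeartbeats 400000

/-! ### Auxiliary lemmas -/

lemma rsmul_apply (q : Hq) (x : Hsp) (n : ℕ) : rsmul q x n = x n * q := by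
  simp [rsmul, lp.coeFn_smul, Pi.smul_apply, op_smul_eq_mul]

lemma rsmul_add' (q : Hq) (x y : Hsp) : rsmul q (x + y) = rsmul q x + rsmul q y :=
  smul_add _ _ _

lemma rsmul_rsmul (p q : Hq) (x : Hsp) : rsmul p (rsmul q x) = rsmul (q * p) x := by
  unfold rsmul
  rw [smul_smul, ← MulOpposite.op_mul]

lemma rsmul_neg_one (z : Hsp) : rsmul (-1) z = -z := by
  unfold rsmul
  rw [show (MulOpposite.op (-1 : Hq)) = -1 by simp]
  exact neg_one_smul _ z

lemma rsmul_continuous (q : Hq) : Continuous (fun x : Hsp => rsmul q x) :=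
  continuous_const_smul _

lemma lp_ext' {z w : Hsp} (h : ∀ n, z n = w n) : z = w := by
  apply lp.ext; funext n; exact h n

lemma summ2 (x : Hsp) : Summable (fun n => ‖x n‖^2) := by
  have h := (lp.memℓp x).summable (p := 2) (by norm_num)
  norm_num at h
  convert h using 2 with n

lemma norm_sq_eq (z : Hsp) : ‖z‖^2 = ∑' n, ‖z n‖^2 := by
  have := lp.norm_rpow_eq_tsum (p := 2) (by norm_num) z
  norm_num at this
  rw [← this]

lemma qsummable (x y : Hsp) : Summable (fun n => star (x n) * y n) := by
  apply Summable.of_norm_bounded (g := fun n => (‖x n‖^2 + ‖y n‖^2)/2)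
  · exact (((summ2 x).add (summ2 y)).div_const 2)
  · intro n
    have : ‖star (x n) * y n‖ ≤ ‖x n‖ * ‖y n‖ := by
      rw [norm_mul, norm_star]
    nlinarith [sq_nonneg (‖x n‖ - ‖y n‖), norm_nonneg (x n), norm_nonneg (y n)]

lemma qinner_add_left (a b x : Hsp) : qinner (a + b) x = qinner a x + qinner b x := by
  simp only [qinner, lp.coeFn_add, Pi.add_apply, star_add, add_mul]
  exact Summable.tsum_add (qsummable a x) (qsummable b x)

lemma qinner_neg_left (a x : Hsp) : qinner (-a) x = -qinner a x := by
  simp only [qinner, lp.coeFn_neg, Pi.neg_apply, star_neg, neg_mul]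
  exact tsum_neg

lemma qinner_rsmul_left (p : Hq) (x y : Hsp) :
    qinner (rsmul p x) y = star p * qinner x y := by
  simp only [qinner]
  rw [← tsum_mul_left]
  congr 1; funext n
  rw [rsmul_apply, star_mul, mul_assoc]

lemma qinner_rsmul_right (p : Hq) (x y : Hsp) :
    qinner x (rsmul p y) = qinner x y * p := by
  simp only [qinner]
  rw [← tsum_mul_right]
  congr 1; funext n
  rw [rsmul_apply, mul_assoc]

lemma qinner_self (z : Hsp) : qinner z z = ((‖z‖^2 : ℝ) : Hq) := by
  have h1 : ∀ n : ℕ, star (z n) * z n = ((‖z n‖^2 : ℝ) : Hq) := by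
    intro n
    rw [star_mul_self]
    rw [Quaternion.normSq_eq_norm_mul_self]
    norm_cast; ring
  rw [qinner]
  simp_rw [h1]
  rw [norm_sq_eq]
  exact ((summ2 z).hasSum.map (algebraMap ℝ Hq).toAddMonoidHom
    (continuous_algebraMap ℝ Hq)).tsum_eq

lemma qinner_self_eq_zero {z : Hsp} (h : qinner z z = 0) : z = 0 := by
  rw [qinner_self] at h
  have h2 : ((‖z‖^2 : ℝ) : Hq) = ((0:ℝ) : Hq) := by simpa using h
  have : ‖z‖^2 = 0 := Quaternion.coe_injective h2
  have : ‖z‖ = 0 := by nlinarith [norm_nonneg z]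
  exact norm_eq_zero.mp this

lemma rsmul_sub (q : Hq) (x y : Hsp) : rsmul q (x - y) = rsmul q x - rsmul q y :=
  smul_sub _ _ _

lemma rsmul_neg (q : Hq) (x : Hsp) : rsmul q (-x) = -(rsmul q x) := smul_neg _ _

lemma qs_mul_self {m : Hq} (hm : m ∈ QS) : m * m = -1 := by
  obtain ⟨hs, hn⟩ := hm
  have h1 : star m * m = ((normSq m : ℝ) : Hq) := star_mul_self m
  have h2 : normSq m = 1 := by rw [Quaternion.normSq_eq_norm_mul_self, hn]; ring
  rw [hs, neg_mul, h2] at h1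
  push_cast at h1
  exact neg_eq_iff_eq_neg.mp h1

lemma comm_mem_sliceC (m q : Hq) (hm : m ∈ QS) (h : m * q = q * m) : q ∈ sliceC m := by
  obtain ⟨hs, hn⟩ := hm
  have hre : m.re = 0 := by
    have := congrArg QuaternionAlgebra.re hs
    simp at this; linarith
  have hnorm : m.imI^2 + m.imJ^2 + m.imK^2 = 1 := by
    have h2 : normSq m = 1 := by rw [Quaternion.normSq_eq_norm_mul_self, hn]; ring
    rw [Quaternion.normSq_def'] at h2
    nlinarith [hre]
  have hI := congrArg QuaternionAlgebra.imI h
  have hJ := congrArg QuaternionAlgebra.imJ h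
  have hK := congrArg QuaternionAlgebra.imK h
  simp [Quaternion.imI_mul, Quaternion.imJ_mul, Quaternion.imK_mul, hre] at hI hJ hK
  have e1 : m.imI * q.imJ = m.imJ * q.imI := by linarith
  have e2 : m.imI * q.imK = m.imK * q.imI := by linarith
  have e3 : m.imJ * q.imK = m.imK * q.imJ := by linarith
  refine ⟨q.re, m.imI*q.imI + m.imJ*q.imJ + m.imK*q.imK, ?_⟩
  ext
  · simp [Quaternion.re_mul, hre]
  · simp [Quaternion.imI_mul, hre]
    linear_combination -q.imI * hnorm - m.imJ * e1 - m.imK * e2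
  · simp [Quaternion.imJ_mul, hre]
    linear_combination -q.imJ * hnorm + m.imI * e1 - m.imK * e3
  · simp [Quaternion.imK_mul, hre]
    linear_combination -q.imK * hnorm + m.imI * e2 + m.imJ * e3

lemma exists_noncomm (m : Hq) (hm : m ∈ QS) : ∃ c : Hq, c * m ≠ m * c := by
  obtain ⟨hs, hn⟩ := hm
  have hre : m.re = 0 := by
    have := congrArg QuaternionAlgebra.re hs
    simp at this; linarith
  have hnorm : m.imI^2 + m.imJ^2 + m.imK^2 = 1 := by
    have h2 : normSq m = 1 := by rw [Quaternion.normSq_eq_norm_mul_self, hn]; ring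
    rw [Quaternion.normSq_def'] at h2
    nlinarith [hre]
  by_contra hc
  push_neg at hc
  obtain ⟨c1, hc1⟩ : ∃ c : Hq, c.re = 0 ∧ c.imI = 1 ∧ c.imJ = 0 ∧ c.imK = 0 := ⟨⟨0,1,0,0⟩, rfl, rfl, rfl, rfl⟩
  obtain ⟨c2, hc2⟩ : ∃ c : Hq, c.re = 0 ∧ c.imI = 0 ∧ c.imJ = 1 ∧ c.imK = 0 := ⟨⟨0,0,1,0⟩, rfl, rfl, rfl, rfl⟩
  have h1 := hc c1
  have h2 := hc c2
  rw [Quaternion.ext_iff] at h1 h2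
  simp [Quaternion.re_mul, Quaternion.imI_mul, Quaternion.imJ_mul, Quaternion.imK_mul,
    hre, hc1, hc2] at h1 h2
  nlinarith [h1.1, h1.2, h2.2, hnorm]

/-- `H₊^{Jm} = {u : Ju = um}` is a nonzero closed subset of `H`, closed
under addition and under right multiplication by scalars from `ℂ_m`, and the inner
product of two of its elements lies in `ℂ_m`. -/
theorem slice_hilbert_space_properties (J : Hsp → Hsp) (m : Hq) (hm : m ∈ QS)
    (hJlin : IsBoundedRightLinear J) (hJa : IsAntiSelfAdjoint J) (hJu : IsUnitaryOp J) :
    (∃ u ∈ Hplus J m, u ≠ 0) ∧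
    IsClosed (Hplus J m) ∧
    (∀ u ∈ Hplus J m, ∀ v ∈ Hplus J m, u + v ∈ Hplus J m) ∧
    (∀ u ∈ Hplus J m, ∀ q ∈ sliceC m, rsmul q u ∈ Hplus J m) ∧
    (∀ u ∈ Hplus J m, ∀ v ∈ Hplus J m, qinner u v ∈ sliceC m) := by
  
  obtain ⟨hJadd, hJsmul, M, hJbdd⟩ := hJlin
  have hJneg : ∀ x, J (-x) = -(J x) := fun x => by
    rw [← rsmul_neg_one, hJsmul, rsmul_neg_one]
  have hJsub : ∀ x y, J (x - y) = J x - J y := by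
    intro x y; rw [sub_eq_add_neg, hJadd, hJneg, sub_eq_add_neg]
  have hJcont : Continuous J := by
    have hM : ∀ z : Hsp, ‖J z‖ ≤ (max M 0) * ‖z‖ := fun z =>
      le_trans (hJbdd z) (mul_le_mul_of_nonneg_right (le_max_left _ _) (norm_nonneg z))
    refine ((lipschitzWith_iff_dist_le_mul (K := ⟨max M 0, le_max_right _ _⟩)).mpr ?_).continuous
    intro x y
    have := hM (x - y)
    rw [hJsub] at this
    rw [dist_eq_norm, dist_eq_norm]; exact this
  obtain ⟨S, hS, hSJ, hJS⟩ := hJu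
  have hSeq : ∀ y, S y = -(J y) := by
    intro y
    have h0 : qinner (S y + J y) (S y + J y) = 0 := by
      rw [qinner_add_left]
      have h1 := hS (S y + J y) y
      have h2 := hJa (S y + J y) y
      simp only at h2
      rw [qinner_neg_left] at h2
      rw [← h1, h2]
      exact neg_add_cancel _
    exact eq_neg_of_add_eq_zero_left (qinner_self_eq_zero h0)
  have hJJ : ∀ x, J (J x) = -x := by
    intro x
    have h := hSJ x
    rw [hSeq] at h
    exact neg_eq_iff_eq_neg.mp h
  have hmem : ∀ z : Hsp, (z - rsmul m (J z)) ∈ Hplus J m := by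
    intro z
    show J (z - rsmul m (J z)) = rsmul m (z - rsmul m (J z))
    rw [hJsub, hJsmul, hJJ, rsmul_neg, rsmul_sub, rsmul_rsmul, qs_mul_self hm,
      rsmul_neg_one, sub_neg_eq_add, sub_neg_eq_add]
    exact add_comm _ _
  refine ⟨?_, ?_, ?_, ?_, ?_⟩
  · -- nonzero element
    set x : Hsp := lp.single 2 0 (1:Hq) with hxdef
    have hx0 : x 0 = (1:Hq) := by rw [hxdef, lp.single_apply]; simp
    have hxne : x ≠ 0 := by
      intro h
      rw [h] at hx0
      simp at hx0
    by_cases hu : x - rsmul m (J x) = 0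
    · have hx : x = rsmul m (J x) := by rwa [sub_eq_zero] at hu
      have hJx : J x ≠ 0 := by
        intro h
        apply hxne
        rw [hx, h]
        exact smul_zero _
      obtain ⟨c, hcm⟩ := exists_noncomm m hm
      by_cases hu' : rsmul c x - rsmul m (J (rsmul c x)) = 0
      · exfalso
        have h1 : rsmul c x = rsmul m (rsmul c (J x)) := by
          rw [← hJsmul]; rwa [sub_eq_zero] at hu'
        have h2 : rsmul c x = rsmul (m*c) (J x) := by
          conv_lhs => rw [hx, rsmul_rsmul]
        have h4 : rsmul (m*c) (J x) = rsmul (c*m) (J x) := by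
          rw [← h2, h1, rsmul_rsmul]
        have hex : ∃ n, J x n ≠ 0 := by
          by_contra h
          push_neg at h
          exact hJx (lp_ext' fun n => by rw [h n]; rfl)
        obtain ⟨n, hn0⟩ := hex
        have h5 := congrArg (fun z : Hsp => z n) h4
        simp only [rsmul_apply] at h5
        exact hcm (mul_left_cancel₀ hn0 h5).symm
      · exact ⟨_, hmem (rsmul c x), hu'⟩
    · exact ⟨_, hmem x, hu⟩
  · -- closed
    exact isClosed_eq hJcont (rsmul_continuous m)
  · -- addition
    intro u hu v hv
    show J (u + v) = rsmul m (u + v)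
    rw [hJadd, hu, hv, rsmul_add']
  · -- scalar
    intro u hu q hq
    obtain ⟨α, β, rfl⟩ := hq
    have h1 : m * (α:Hq) = (α:Hq) * m := (Quaternion.coe_commutes α m).symm
    have h2 : m * (m * (β:Hq)) = (m * (β:Hq)) * m := by
      rw [mul_assoc, Quaternion.coe_commutes]
    have hqm : m * ((α:Hq) + m * (β:Hq)) = ((α:Hq) + m * (β:Hq)) * m := by
      rw [mul_add, add_mul, h1, h2]
    show J (rsmul _ u) = rsmul m (rsmul _ u)
    rw [hJsmul, hu, rsmul_rsmul, rsmul_rsmul, hqm]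
  · -- inner product
    intro u hu v hv
    have h1 : qinner (J u) (J v) = qinner u v := by
      have h2 := hJa v (J u)
      simp only at h2
      rw [hJJ u, neg_neg] at h2
      exact h2
    have h3 : qinner (J u) (J v) = -(m * (qinner u v * m)) := by
      rw [hu, hv, qinner_rsmul_left, qinner_rsmul_right, hm.1, neg_mul]
    have h5 : qinner u v = -(m * (qinner u v * m)) := h1.symm.trans h3
    have h6 : m * qinner u v = (-(m*m)) * (qinner u v * m) := by
      conv_lhs => rw [h5]
      rw [mul_neg, neg_mul, mul_assoc]
    rw [qs_mul_self hm, neg_neg, one_mul] at h6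
    exact comm_mem_sliceC m _ hm h6
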